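/- Let H be a modular hyperplane of a matroid M and let (F,F') be a modular cover of M with F' ⊆ H. If F' ≠ H, then (F∩H, F'∩H) is a modular cover of the restriction M|H. -/

import Mathlib

open Set

namespace Matroid

variable {α : Type*} {β : Type*}

/-- The rank of a set in a matroid: the supremum of sizes of independent subsets. -/
noncomputable def mRank (M : Matroid α) (X : Set α) : ℕ :=
  sSup {n : ℕ | ∃ I, M.Indep I ∧ I ⊆ X ∧ I.ncard = n}

/-- The rank of a matroid. -/
noncomputable def mRk (M : Matroid α) : ℕ := M.mRank M.E

/-- A flat `F` is modular if `r F + r F' = r (F ∪ F') + r (F ∩ F')` for every flat `F'`. -/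
def IsModularFlat (M : Matroid α) (F : Set α) : Prop :=
  M.IsFlat F ∧ ∀ F', M.IsFlat F' →
    M.mRank F + M.mRank F' = M.mRank (F ∪ F') + M.mRank (F ∩ F')

/-- A proper flat is a flat other than the ground set. -/
def IsProperFlat (M : Matroid α) (F : Set α) : Prop := M.IsFlat F ∧ F ≠ M.E

/-- A vertical cover is a pair of proper flats whose union is the ground set. -/
def VerticalCover (M : Matroid α) (F F' : Set α) : Prop :=
  M.IsProperFlat F ∧ M.IsProperFlat F' ∧ F ∪ F' = M.E

/-- A modular cover is a vertical cover by two modular flats. -/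
def ModularCover (M : Matroid α) (F F' : Set α) : Prop :=
  M.VerticalCover F F' ∧ M.IsModularFlat F ∧ M.IsModularFlat F'

/-- A matroid is round if it has no vertical cover. -/
def Round (M : Matroid α) : Prop := ∀ F F', ¬ M.VerticalCover F F'

/-- A subset of the ground set is round if the restriction to it is round. -/
def RoundSet (M : Matroid α) (X : Set α) : Prop := X ⊆ M.E ∧ (M ↾ X).Round

/-- A rotunda is a maximal round flat. -/
def Rotunda (M : Matroid α) (R : Set α) : Prop :=
  M.IsFlat R ∧ M.RoundSet R ∧ ∀ R', M.IsFlat R' → M.RoundSet R' → R ⊆ R' → R' = R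

/-- A matroid of rank `r` is supersolvable if there is a chain of modular flats
`F 0 ⊆ F 1 ⊆ ⋯ ⊆ F r` with `r (F i) = i` for each `i`. -/
def Supersolvable (M : Matroid α) : Prop :=
  ∃ F : ℕ → Set α, (∀ i ≤ M.mRk, M.IsModularFlat (F i) ∧ M.mRank (F i) = i) ∧
    ∀ i < M.mRk, F i ⊆ F (i + 1)

/-- A matroid is saturated if every round flat is modular. -/
def Saturated (M : Matroid α) : Prop :=
  ∀ F, M.IsFlat F → M.RoundSet F → M.IsModularFlat F

/-- A circuit: a minimal dependent subset of the ground set. -/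
def Circ (M : Matroid α) (C : Set α) : Prop :=
  C ⊆ M.E ∧ ¬ M.Indep C ∧ ∀ D ⊂ C, M.Indep D

/-- A matroid is connected if it is non-empty and every two distinct elements lie in a
common circuit. -/
def ConnectedM (M : Matroid α) : Prop :=
  M.E.Nonempty ∧ ∀ x ∈ M.E, ∀ y ∈ M.E, x = y ∨ ∃ C, M.Circ C ∧ x ∈ C ∧ y ∈ C

/-- A hyperplane: a flat of rank `r M - 1`. -/
def IsHyperplane (M : Matroid α) (H : Set α) : Prop :=
  M.IsFlat H ∧ M.mRank H + 1 = M.mRk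

/-- The union of the projections `P_H(x, y) = H ∩ cl (x ∪ y)` onto the modular hyperplane `H`,
taken over all pairs of distinct rank-one flats `x = cl {a}`, `y = cl {b}` spanned by
elements `a, b` of `X`. -/
def projUnion (M : Matroid α) (H X : Set α) : Set α :=
  ⋃ a ∈ X, ⋃ b ∈ X, ⋃ (_ : M.closure {a} ≠ M.closure {b}), H ∩ M.closure {a, b}

/-- Two elements are related if they are equal or lie in a common circuit; the connected
components of a matroid are the restrictions to the equivalence classes of this relation. -/
def connRel (M : Matroid α) (x y : α) : Prop :=
  x = y ∨ ∃ C, M.Circ C ∧ x ∈ C ∧ y ∈ C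

/-- The rotunda graph of a matroid: vertices are the rotunda; two rotunda are adjacent if
they intersect and there is a modular cover separating them at their intersection. -/
def rotundaGraph (M : Matroid α) : SimpleGraph {R : Set α // M.Rotunda R} where
  Adj R₁ R₂ := R₁ ≠ R₂ ∧ (R₁.1 ∩ R₂.1).Nonempty ∧
    ∃ F₁ F₂, M.ModularCover F₁ F₂ ∧ R₁.1 ⊆ F₁ ∧ R₂.1 ⊆ F₂ ∧ F₁ ∩ F₂ = R₁.1 ∩ R₂.1
  symm := by
    constructor
    rintro a b ⟨hne, hint, F₁, F₂, ⟨⟨hp1, hp2, hu⟩, hm1, hm2⟩, h1, h2, hi⟩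
    refine ⟨hne.symm, by rwa [Set.inter_comm], F₂, F₁,
      ⟨⟨hp2, hp1, by rwa [Set.union_comm]⟩, hm2, hm1⟩, h2, h1, ?_⟩
    rw [Set.inter_comm, hi, Set.inter_comm]
  loopless := ⟨fun a h => h.1 rfl⟩

/-- A rotunda tree of `M`: a tree on the rotunda of `M` such that for each element `x` of the
ground set, the rotunda containing `x` induce a (nonempty) subtree. -/
def IsRotundaTree (M : Matroid α) (T : SimpleGraph {R : Set α // M.Rotunda R}) : Prop :=
  T.IsTree ∧ ∀ x ∈ M.E, (T.induce {t : {R : Set α // M.Rotunda R} | x ∈ t.1}).Connected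

/-- A legitimate weighting of `M`: zero on the empty set, and strictly monotone under proper
inclusion on the set consisting of `∅` and the pairwise intersections of distinct rotunda. -/
def LegitimateWeighting (M : Matroid α) (σ : Set α → ℕ) : Prop :=
  σ ∅ = 0 ∧
  ∀ X X' : Set α,
    (X = ∅ ∨ ∃ R R', M.Rotunda R ∧ M.Rotunda R' ∧ R ≠ R' ∧ X = R ∩ R') →
    (X' = ∅ ∨ ∃ R R', M.Rotunda R ∧ M.Rotunda R' ∧ R ≠ R' ∧ X' = R ∩ R') →
    X ⊂ X' → σ X < σ X'

/-- The total weight of a graph on the rotunda of `M`, where the edge joining rotunda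
`R` and `R'` gets weight `σ (R ∩ R')`. -/
noncomputable def treeWeight {M : Matroid α} (σ : Set α → ℕ)
    (T : SimpleGraph {R : Set α // M.Rotunda R}) : ℕ :=
  ∑ᶠ e ∈ T.edgeSet,
    Sym2.lift ⟨fun a b => σ (a.1 ∩ b.1), fun a b => by simp [Set.inter_comm]⟩ e

/-- A tree-decomposition of a matroid: a tree together with bags covering the ground set. -/
def IsTreeDecomp (M : Matroid α) (T : SimpleGraph β) (τ : β → Set α) : Prop :=
  T.IsTree ∧ ∀ x ∈ M.E, ∃ t, x ∈ τ t

/-- The node-width of a node `t` in a tree-decomposition `(T, τ)` of `M`: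
`(Σ_i r (τ t ∪ ⋃_{k ≠ i} F_k)) − (d − 1) · r M`, where `F_1, …, F_d` are the unions of the
bags over the connected components of `T − t`. -/
noncomputable def nodeWidth (M : Matroid α) (T : SimpleGraph β) (τ : β → Set α) (t : β) : ℤ :=
  (∑ᶠ c : (T.induce {s : β | s ≠ t}).ConnectedComponent,
      (M.mRank (τ t ∪ ⋃ (s : {s : β // s ≠ t})
        (_ : (T.induce {s : β | s ≠ t}).connectedComponentMk s ≠ c), τ s.1) : ℤ))
    - ((Nat.card (T.induce {s : β | s ≠ t}).ConnectedComponent : ℤ) - 1) * (M.mRk : ℤ)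

/-- The width of a tree-decomposition: the maximum node-width. -/
noncomputable def decompWidth (M : Matroid α) (T : SimpleGraph β) (τ : β → Set α) : ℤ :=
  sSup (Set.range (M.nodeWidth T τ))

/-- The tree-width of a matroid: the minimum width of a (finite) tree-decomposition. -/
noncomputable def treeWidth (M : Matroid α) : ℕ :=
  sInf {n : ℕ | ∃ (β : Type) (T : SimpleGraph β) (τ : β → Set α),
    Finite β ∧ M.IsTreeDecomp T τ ∧ ∀ t, M.nodeWidth T τ t ≤ (n : ℤ)}

end Matroid

namespace SimpleGraph

/-- A graph is chordal if every cycle with at least four edges has a chord: an edge of the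
graph joining two vertices of the cycle that is not an edge of the cycle. -/
def IsChordal {V : Type*} (G : SimpleGraph V) : Prop :=
  ∀ ⦃v : V⦄ (w : G.Walk v v), w.IsCycle → 4 ≤ w.length →
    ∃ x y, x ∈ w.support ∧ y ∈ w.support ∧ G.Adj x y ∧ s(x, y) ∉ w.edges

/-- A maximal clique of a graph. -/
def MaxClique {V : Type*} (G : SimpleGraph V) (C : Set V) : Prop :=
  G.IsClique C ∧ ∀ D, G.IsClique D → C ⊆ D → D = C

/-- The reduced clique graph of a graph: vertices are the maximal cliques; two maximal
cliques are adjacent if they intersect and every walk from one side to the other passes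
through their intersection. -/
def reducedCliqueGraph {V : Type*} (G : SimpleGraph V) :
    SimpleGraph {C : Set V // G.MaxClique C} where
  Adj C₁ C₂ := C₁ ≠ C₂ ∧ (C₁.1 ∩ C₂.1).Nonempty ∧
    ∀ u ∈ C₁.1 \ C₂.1, ∀ v ∈ C₂.1 \ C₁.1, ∀ p : G.Walk u v,
      ∃ z ∈ p.support, z ∈ C₁.1 ∩ C₂.1
  symm := by
    constructor
    rintro a b ⟨hne, hint, hsep⟩
    refine ⟨hne.symm, by rwa [Set.inter_comm], fun u hu v hv p => ?_⟩
    obtain ⟨z, hz, hz2⟩ := hsep v hv u hu p.reverse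
    refine ⟨z, ?_, by rwa [Set.inter_comm]⟩
    simpa [SimpleGraph.Walk.support_reverse] using hz
  loopless := ⟨fun a h => h.1 rfl⟩

end SimpleGraph

namespace Matroid

variable {α : Type*} {M : Matroid α} {X Y F G H I : Set α} {x : α}

private lemma mRank_set_nonempty (M : Matroid α) (X : Set α) :
    {n : ℕ | ∃ I, M.Indep I ∧ I ⊆ X ∧ I.ncard = n}.Nonempty :=
  ⟨0, ∅, M.empty_indep, empty_subset X, by simp⟩

private lemma mRank_set_bddAbove (M : Matroid α) [M.Finite] (X : Set α) :
    BddAbove {n : ℕ | ∃ I, M.Indep I ∧ I ⊆ X ∧ I.ncard = n} := by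
  refine ⟨M.E.ncard, ?_⟩
  rintro n ⟨I, hI, -, rfl⟩
  exact Set.ncard_le_ncard hI.subset_ground M.ground_finite

private lemma Indep.ncard_le_mRank [M.Finite] (hI : M.Indep I) (hIX : I ⊆ X) :
    I.ncard ≤ M.mRank X :=
  le_csSup (M.mRank_set_bddAbove X) ⟨I, hI, hIX, rfl⟩

private lemma IsBasis'.mRank_eq [M.Finite] (hI : M.IsBasis' I X) : M.mRank X = I.ncard := by
  refine le_antisymm (csSup_le (M.mRank_set_nonempty X) ?_)
    (hI.indep.ncard_le_mRank hI.subset)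
  rintro n ⟨J, hJ, hJX, rfl⟩
  by_contra hlt
  push_neg at hlt
  have hIfin : I.Finite := M.ground_finite.subset hI.indep.subset_ground
  have hJfin : J.Finite := M.ground_finite.subset hJ.subset_ground
  have hcard : I.encard < J.encard := by
    rw [← hIfin.cast_ncard_eq, ← hJfin.cast_ncard_eq]
    exact_mod_cast hlt
  obtain ⟨e, heJI, hins⟩ := hI.indep.augment hJ hcard
  have heq := hI.eq_of_subset_indep hins (subset_insert _ _)
    (insert_subset (hJX heJI.1) hI.subset)
  exact heJI.2 (heq ▸ mem_insert e I)

private lemma mRank_mono (M : Matroid α) [M.Finite] (h : X ⊆ Y) : M.mRank X ≤ M.mRank Y := by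
  refine csSup_le (M.mRank_set_nonempty X) ?_
  rintro n ⟨I, hI, hIX, rfl⟩
  exact hI.ncard_le_mRank (hIX.trans h)

private lemma mRank_le_mRk (M : Matroid α) [M.Finite] (X : Set α) : M.mRank X ≤ M.mRk := by
  refine csSup_le (M.mRank_set_nonempty X) ?_
  rintro n ⟨I, hI, hIX, rfl⟩
  exact hI.ncard_le_mRank hI.subset_ground

private lemma mRank_submod (M : Matroid α) [M.Finite] (X Y : Set α) :
    M.mRank (X ∪ Y) + M.mRank (X ∩ Y) ≤ M.mRank X + M.mRank Y := by
  obtain ⟨I, hI⟩ := M.exists_isBasis' (X ∩ Y)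
  obtain ⟨J, hJ, hIJ⟩ := hI.indep.subset_isBasis'_of_subset
    (hI.subset.trans (inter_subset_left.trans subset_union_left))
  have hJfin : J.Finite := M.ground_finite.subset hJ.indep.subset_ground
  have h1 : (J ∩ X).ncard ≤ M.mRank X :=
    (hJ.indep.subset inter_subset_left).ncard_le_mRank inter_subset_right
  have h2 : (J ∩ Y).ncard ≤ M.mRank Y :=
    (hJ.indep.subset inter_subset_left).ncard_le_mRank inter_subset_right
  have hu : (J ∩ X) ∪ (J ∩ Y) = J := by
    rw [← inter_union_distrib_left]
    exact inter_eq_self_of_subset_left hJ.subset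
  have hi : (J ∩ X) ∩ (J ∩ Y) = J ∩ (X ∩ Y) := by ext a; simp; tauto
  have hcard := Set.ncard_union_add_ncard_inter (J ∩ X) (J ∩ Y)
    (hJfin.inter_of_left _) (hJfin.inter_of_left _)
  rw [hu, hi] at hcard
  have hIc : I.ncard ≤ (J ∩ (X ∩ Y)).ncard :=
    Set.ncard_le_ncard (subset_inter hIJ hI.subset) (hJfin.inter_of_left _)
  rw [hJ.mRank_eq, hI.mRank_eq]
  omega

private lemma mRank_insert_flat [M.Finite] (hF : M.IsFlat X) (hx : x ∈ M.E) (hxF : x ∉ X) :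
    M.mRank X + 1 ≤ M.mRank (insert x X) := by
  obtain ⟨I, hI⟩ := M.exists_isBasis X hF.subset_ground
  have hIfin : I.Finite := M.ground_finite.subset hI.indep.subset_ground
  have hxI : x ∉ M.closure I := by
    rw [hI.closure_eq_closure, hF.closure]; exact hxF
  have hins : M.Indep (insert x I) :=
    hI.indep.insert_indep_iff.2 (Or.inl ⟨hx, hxI⟩)
  have hc : (insert x I).ncard = I.ncard + 1 :=
    Set.ncard_insert_of_notMem (fun h => hxF (hI.subset h)) hIfin
  have hle := hins.ncard_le_mRank (insert_subset_insert hI.subset)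
  rw [hI.isBasis'.mRank_eq]
  omega

private lemma mRank_restrict (M : Matroid α) (H X : Set α) :
    (M ↾ H).mRank X = M.mRank (X ∩ H) := by
  unfold mRank
  congr 1
  ext n
  constructor
  · rintro ⟨I, hI, hIX, rfl⟩
    exact ⟨I, (restrict_indep_iff.1 hI).1,
      subset_inter hIX (restrict_indep_iff.1 hI).2, rfl⟩
  · rintro ⟨I, hI, hIX, rfl⟩
    exact ⟨I, restrict_indep_iff.2 ⟨hI, hIX.trans inter_subset_right⟩,
      hIX.trans inter_subset_left, rfl⟩

private lemma flat_of_closure_subset (hFE : F ⊆ M.E) (h : M.closure F ⊆ F) : M.IsFlat F :=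
  ⟨fun I X hIF hIX => hIX.subset_closure.trans
    ((M.closure_subset_closure hIF.subset).trans h), hFE⟩

private lemma IsFlat.inter' (hF : M.IsFlat F) (hG : M.IsFlat G) : M.IsFlat (F ∩ G) := by
  refine flat_of_closure_subset (inter_subset_left.trans hF.subset_ground) ?_
  exact subset_inter
    ((M.closure_subset_closure inter_subset_left).trans hF.closure.subset)
    ((M.closure_subset_closure inter_subset_right).trans hG.closure.subset)

private lemma flat_restrict_iff' (hH : M.IsFlat H) :
    (M ↾ H).IsFlat G ↔ M.IsFlat G ∧ G ⊆ H := by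
  constructor
  · intro hG
    have hGH : G ⊆ H := hG.subset_ground
    have hGE : G ⊆ M.E := hGH.trans hH.subset_ground
    refine ⟨⟨fun I X hIG hIX => ?_, hGE⟩, hGH⟩
    have hXH : X ⊆ H := hIX.subset_closure.trans
      ((M.closure_subset_closure (hIG.subset.trans hGH)).trans hH.closure.subset)
    have hIG' : (M ↾ H).IsBasis I G := isBasis_restrict_iff'.2
      ⟨by rwa [inter_eq_self_of_subset_left hGE], hGH⟩
    have hIX' : (M ↾ H).IsBasis I X := isBasis_restrict_iff'.2
      ⟨by rwa [inter_eq_self_of_subset_left (hXH.trans hH.subset_ground)], hXH⟩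
    exact hG.subset_of_isBasis_of_isBasis hIG' hIX'
  · rintro ⟨hG, hGH⟩
    refine ⟨fun I X hIG hIX => ?_, hGH⟩
    rw [isBasis_restrict_iff'] at hIG hIX
    rw [inter_eq_self_of_subset_left (hIG.2.trans hH.subset_ground)] at hIG
    rw [inter_eq_self_of_subset_left (hIX.2.trans hH.subset_ground)] at hIX
    exact hG.subset_of_isBasis_of_isBasis hIG.1 hIX.1

end Matroid

open Matroid

/-- Let `H` be a modular hyperplane of `M` and `(F, F')` a modular cover of `M` with
`F' ⊆ H`. If `F' ≠ H`, then `(F ∩ H, F' ∩ H)` is a modular cover of `M ↾ H`. -/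
theorem modularCover_restrict_hyperplane {α : Type*} (M : Matroid α) [M.Finite]
    (H F F' : Set α) (hH : M.IsHyperplane H) (hmod : M.IsModularFlat H)
    (hmc : M.ModularCover F F') (hsub : F' ⊆ H) (hne : F' ≠ H) :
    (M ↾ H).ModularCover (F ∩ H) (F' ∩ H) := by
  obtain ⟨⟨⟨hFflat, hFne⟩, ⟨hF'flat, hF'ne⟩, hunion⟩, hFmod, hF'mod⟩ := hmc
  obtain ⟨hHflat, hHrank⟩ := hH
  have hHE : H ⊆ M.E := hHflat.subset_ground
  have hFE : F ⊆ M.E := hFflat.subset_ground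
  have hF'H : F' ∩ H = F' := inter_eq_self_of_subset_left hsub
  -- F is not contained in H
  have hFnotH : ¬ F ⊆ H := by
    intro h
    have hHeq : H = M.E := hHE.antisymm (by rw [← hunion]; exact union_subset h hsub)
    rw [hHeq] at hHrank
    simp only [mRk] at hHrank
    omega
  obtain ⟨x, hxF, hxH⟩ := not_subset.1 hFnotH
  -- H is not contained in F
  have hHnotF : ¬ H ⊆ F := by
    intro h
    exact hFne (hFE.antisymm (by rw [← hunion]; exact union_subset Subset.rfl (hsub.trans h)))
  -- F ∪ H is spanning
  have hFH_top : M.mRank (F ∪ H) = M.mRk := by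
    refine le_antisymm (M.mRank_le_mRk _) ?_
    calc M.mRk = M.mRank H + 1 := hHrank.symm
      _ ≤ M.mRank (insert x H) := mRank_insert_flat hHflat (hFE hxF) hxH
      _ ≤ M.mRank (F ∪ H) :=
          M.mRank_mono (insert_subset (Or.inl hxF) subset_union_right)
  have hmodH := hFmod.2 H hHflat
  rw [hFH_top] at hmodH
  have hFcapH : M.mRank (F ∩ H) + 1 = M.mRank F := by omega
  have hFHflat : M.IsFlat (F ∩ H) := hFflat.inter' hHflat
  refine ⟨⟨⟨?_, ?_⟩, ?_, ?_⟩, ⟨?_, ?_⟩, ?_⟩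
  · exact (flat_restrict_iff' hHflat).2 ⟨hFHflat, inter_subset_right⟩
  · show F ∩ H ≠ (M ↾ H).E
    rw [restrict_ground_eq]
    intro h
    refine hHnotF fun y hy => ?_
    rw [← h] at hy
    exact hy.1
  · rw [hF'H]
    exact ⟨(flat_restrict_iff' hHflat).2 ⟨hF'flat, hsub⟩, by rwa [restrict_ground_eq]⟩
  · show F ∩ H ∪ F' ∩ H = (M ↾ H).E
    rw [restrict_ground_eq, ← union_inter_distrib_right, hunion,
      inter_eq_self_of_subset_right hHE]
  · exact (flat_restrict_iff' hHflat).2 ⟨hFHflat, inter_subset_right⟩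
  · -- modularity of F ∩ H in M ↾ H
    intro G hG
    obtain ⟨hGflat, hGH⟩ := (flat_restrict_iff' hHflat).1 hG
    have e1 : (F ∩ H) ∩ H = F ∩ H := by rw [inter_assoc, inter_self]
    have e2 : G ∩ H = G := inter_eq_self_of_subset_left hGH
    have e3 : ((F ∩ H) ∪ G) ∩ H = (F ∩ H) ∪ G :=
      inter_eq_self_of_subset_left (union_subset inter_subset_right hGH)
    have e5 : (F ∩ H) ∩ G = F ∩ G := by
      ext y
      simp only [mem_inter_iff]
      exact ⟨fun h => ⟨h.1.1, h.2⟩, fun h => ⟨⟨h.1, hGH h.2⟩, h.2⟩⟩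
    have e4 : ((F ∩ H) ∩ G) ∩ H = F ∩ G := by
      rw [e5]
      exact inter_eq_self_of_subset_left (inter_subset_right.trans hGH)
    rw [mRank_restrict, mRank_restrict, mRank_restrict, mRank_restrict, e1, e2, e3, e4]
    have hsub1 := M.mRank_submod (F ∩ H) G
    rw [e5] at hsub1
    have hmodG := hFmod.2 G hGflat
    have hsub2 := M.mRank_submod ((F ∩ H) ∪ G) F
    have e6 : ((F ∩ H) ∪ G) ∪ F = F ∪ G := by ext y; simp only [mem_union, mem_inter_iff]; tauto
    rw [e6] at hsub2
    have e7 : M.mRank (F ∩ H) ≤ M.mRank (((F ∩ H) ∪ G) ∩ F) :=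
      M.mRank_mono (subset_inter subset_union_left inter_subset_left)
    omega
  · -- modularity of F' ∩ H = F' in M ↾ H
    rw [hF'H]
    refine ⟨(flat_restrict_iff' hHflat).2 ⟨hF'flat, hsub⟩, fun G hG => ?_⟩
    obtain ⟨hGflat, hGH⟩ := (flat_restrict_iff' hHflat).1 hG
    rw [mRank_restrict, mRank_restrict, mRank_restrict, mRank_restrict,
      inter_eq_self_of_subset_left hsub, inter_eq_self_of_subset_left hGH,
      inter_eq_self_of_subset_left (union_subset hsub hGH),
      inter_eq_self_of_subset_left (inter_subset_right.trans hGH)]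
    exact hF'mod.2 G hGflat
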